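/- Sign trichotomy of the marginal-energy expression (equation (A3)): For every r > 0, with P'(r) = e^r/g: if r < r_ee then P'(r)·r − (P(r) + ρ) < 0; if r = r_ee then P'(r)·r − (P(r) + ρ) = 0; and if r > r_ee then P'(r)·r − (P(r) + ρ) > 0. -/

import Mathlib

open Real Finset

/-- Transmit-power function `P(r) = (e^r - 1)/g` for channel power gain `g`. -/
noncomputable def P (g r : ℝ) : ℝ := (Real.exp r - 1) / g

/-- Energy-efficiency (energy-per-bit) ratio `ξ(r) = (P(r) + ρ)/r`. -/
noncomputable def xi (g ρ r : ℝ) : ℝ := (P g r + ρ) / r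

lemma hasDerivAt_F (g ρ r : ℝ) :
    HasDerivAt (fun r => Real.exp r / g * r - ((Real.exp r - 1) / g + ρ))
      (Real.exp r * r / g) r := by
  have h1 : HasDerivAt (fun r => Real.exp r / g * r)
      (Real.exp r / g * r + Real.exp r / g * 1) r :=
    ((Real.hasDerivAt_exp r).div_const g).mul (hasDerivAt_id r)
  have h2 : HasDerivAt (fun r => (Real.exp r - 1) / g + ρ) (Real.exp r / g) r :=
    (((Real.hasDerivAt_exp r).sub_const 1).div_const g).add_const ρ
  have := h1.sub h2
  exact this.congr_deriv (by ring)

/-- **Sign trichotomy of the marginal-energy expression (equation (A3)).**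
For every `r > 0`, with `P'(r) = e^r/g`: the quantity `P'(r)·r - (P(r) + ρ)` is negative
for `r < r_ee`, zero at `r = r_ee`, and positive for `r > r_ee`. -/
theorem marginal_energy_sign_trichotomy
    (g ρ ree : ℝ) (hg : 0 < g) (hρ : 0 < ρ)
    (hree_pos : 0 < ree)
    (hree_min : ∀ r : ℝ, 0 < r → r ≠ ree → xi g ρ ree < xi g ρ r) :
    ∀ r : ℝ, 0 < r →
      (r < ree → Real.exp r / g * r - (P g r + ρ) < 0) ∧
      (r = ree → Real.exp r / g * r - (P g r + ρ) = 0) ∧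
      (ree < r → 0 < Real.exp r / g * r - (P g r + ρ)) := by
  set F : ℝ → ℝ := fun r => Real.exp r / g * r - ((Real.exp r - 1) / g + ρ) with hF
  -- F is strictly increasing on [0, ∞)
  have hFmono : StrictMonoOn F (Set.Ici 0) := by
    apply strictMonoOn_of_deriv_pos (convex_Ici 0)
    · exact fun x _ => (hasDerivAt_F g ρ x).continuousAt.continuousWithinAt
    · intro x hx
      rw [(hasDerivAt_F g ρ x).deriv]
      have hx0 : 0 < x := by simpa using hx
      positivity
  -- F ree = 0 : derivative of xi at the minimizer vanishes
  have hxi : HasDerivAt (xi g ρ) (F ree / ree ^ 2) ree := by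
    have hN : HasDerivAt (fun r => (Real.exp r - 1) / g + ρ) (Real.exp ree / g) ree :=
      (((Real.hasDerivAt_exp ree).sub_const 1).div_const g).add_const ρ
    have hD : HasDerivAt (fun r : ℝ => r) 1 ree := hasDerivAt_id ree
    have heq : xi g ρ = fun r => ((Real.exp r - 1) / g + ρ) / r := by
      ext r; simp [xi, P]
    rw [heq]
    exact (hN.div hD (ne_of_gt hree_pos)).congr_deriv (by rw [hF]; ring)
  have hmin : IsLocalMin (xi g ρ) ree := by
    filter_upwards [eventually_gt_nhds hree_pos] with r hr
    rcases eq_or_ne r ree with h | h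
    · simp [h]
    · exact (hree_min r hr h).le
  have hF0 : F ree = 0 := by
    have := hmin.hasDerivAt_eq_zero hxi
    field_simp at this
    simpa using this
  intro r hr
  have hr' : r ∈ Set.Ici (0:ℝ) := le_of_lt hr
  have hree' : ree ∈ Set.Ici (0:ℝ) := le_of_lt hree_pos
  refine ⟨fun h => ?_, fun h => ?_, fun h => ?_⟩
  · have := hFmono hr' hree' h
    rw [hF0] at this
    simpa [F, P] using this
  · subst h
    simpa [F, P] using hF0
  · have := hFmono hree' hr' h
    rw [hF0] at this
    simpa [F, P] using this
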